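/- arXiv:2404.15374 — 3 statements merged into one kernel-verified Lean document; each statement's English description precedes it below -/
import Mathlib

section
/- Suppose ν ≥ 2, let F̃ be an integer with 1 ≤ F̃ ≤ N_b − 1, and suppose the vector ε̄ is nonincreasing and there is a real c > 0 with ε̄_n = c for every n with F̃ ≤ n ≤ N_b − 1. Then the simplified log-likelihood is constant beyond F̃: for every integer F with F̃ < F ≤ N_b − 1 one has L̂L_F = L̂L_{F−1}; consequently L̂L_F = L̂L_{F̃} for all F with F̃ ≤ F ≤ N_b − 1. -/
open Finset

/-- Estimated noise power `ψ²_F = (1/(N−F)) · Σ_{n=F}^{N−1} ε̄_n`. -/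
noncomputable def psiSq (N : ℕ) (ε : ℕ → ℝ) (F : ℕ) : ℝ :=
  (1 / ((N : ℝ) - (F : ℝ))) * ∑ n ∈ Finset.Ico F N, ε n

/-- Estimated signal power `λ_n^{(F)} = ε̄_n − ψ²_F`. -/
noncomputable def lamSig (N : ℕ) (ε : ℕ → ℝ) (F n : ℕ) : ℝ :=
  ε n - psiSq N ε F

/-- Matched scale parameter `η²_{F,n}`. -/
noncomputable def etaSq (N : ℕ) (ε : ℕ → ℝ) (ν : ℝ) (F n : ℕ) : ℝ :=
  Real.sqrt ((2 * ν * (psiSq N ε F) ^ 2 + 4 * (psiSq N ε F) * lamSig N ε F n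
    + (ν * psiSq N ε F + lamSig N ε F n) ^ 2) / (ν * (2 + ν)))

/-- Simplified log-likelihood `L̂L_F`. -/
noncomputable def LLhat (N : ℕ) (ε : ℕ → ℝ) (ν : ℝ) (F : ℕ) : ℝ :=
  (∑ n ∈ Finset.range F,
      (-(ν / 2) * Real.log (2 * etaSq N ε ν F n) - ε n / (2 * etaSq N ε ν F n)))
  + ∑ n ∈ Finset.Ico F N,
      (-(ν / 2) * Real.log (2 * psiSq N ε F) - ε n / (2 * psiSq N ε F))

/-- If `ν ≥ 2`, `ε̄` is nonincreasing and constantly equal to some `c > 0` from index `F̃` on,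
then the simplified log-likelihood is constant beyond `F̃`:
`L̂L_F = L̂L_{F−1}` for `F̃ < F ≤ N_b − 1`, and consequently
`L̂L_F = L̂L_{F̃}` for all `F̃ ≤ F ≤ N_b − 1`. -/
theorem LLhat_constant_beyond_Ftilde
    (Nb : ℕ) (hNb : 2 ≤ Nb) (ν : ℝ) (hν : 2 ≤ ν)
    (ε : ℕ → ℝ) (hmono : ∀ i j : ℕ, i ≤ j → j ≤ Nb - 1 → ε j ≤ ε i)
    (Ft : ℕ) (hFt1 : 1 ≤ Ft) (hFt2 : Ft ≤ Nb - 1)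
    (c : ℝ) (hc : 0 < c) (hconst : ∀ n : ℕ, Ft ≤ n → n ≤ Nb - 1 → ε n = c) :
    (∀ F : ℕ, Ft < F → F ≤ Nb - 1 → LLhat Nb ε ν F = LLhat Nb ε ν (F - 1)) ∧
    (∀ F : ℕ, Ft ≤ F → F ≤ Nb - 1 → LLhat Nb ε ν F = LLhat Nb ε ν Ft) := by
  have hν0 : (0:ℝ) < ν := lt_of_lt_of_le (by norm_num) hν
  have hν2 : ν * (2 + ν) ≠ 0 := by positivity
  -- psi is constantly c for F in [Ft, Nb-1]
  have hpsi : ∀ F : ℕ, Ft ≤ F → F ≤ Nb - 1 → psiSq Nb ε F = c := by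
    intro F hF1 hF2
    have hFN : F < Nb := by omega
    have hsum : ∑ n ∈ Finset.Ico F Nb, ε n = ((Nb - F : ℕ) : ℝ) * c := by
      have hcc : ∀ n ∈ Finset.Ico F Nb, ε n = c := by
        intro n hn
        rw [Finset.mem_Ico] at hn
        exact hconst n (le_trans hF1 hn.1) (by omega)
      rw [Finset.sum_congr rfl hcc, Finset.sum_const, Nat.card_Ico, nsmul_eq_mul]
    have hne : (Nb : ℝ) - (F : ℝ) ≠ 0 := by
      have : (F : ℝ) < (Nb : ℝ) := by exact_mod_cast hFN
      linarith
    rw [psiSq, hsum, Nat.cast_sub hFN.le]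
    field_simp
  -- the key step
  have hstep : ∀ F : ℕ, Ft < F → F ≤ Nb - 1 → LLhat Nb ε ν F = LLhat Nb ε ν (F - 1) := by
    intro F hF1 hF2
    obtain ⟨G, rfl⟩ : ∃ G, F = G + 1 := ⟨F - 1, by omega⟩
    have hG1 : Ft ≤ G := by omega
    have hG2 : G ≤ Nb - 1 := by omega
    have hGN : G < Nb := by omega
    have hpF : psiSq Nb ε (G + 1) = c := hpsi _ (by omega) hF2
    have hpG : psiSq Nb ε G = c := hpsi _ hG1 hG2
    have hεG : ε G = c := hconst G hG1 hG2
    have heta : ∀ n : ℕ, etaSq Nb ε ν (G + 1) n = etaSq Nb ε ν G n := by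
      intro n
      unfold etaSq lamSig
      rw [hpF, hpG]
    have hetaG : etaSq Nb ε ν (G + 1) G = c := by
      unfold etaSq lamSig
      rw [hpF, hεG]
      have : (2 * ν * c ^ 2 + 4 * c * (c - c) + (ν * c + (c - c)) ^ 2) / (ν * (2 + ν))
          = c ^ 2 := by field_simp; ring
      rw [this, Real.sqrt_sq hc.le]
    simp only [Nat.add_sub_cancel]
    unfold LLhat
    rw [Finset.sum_range_succ, Finset.sum_eq_sum_Ico_succ_bot hGN, hpF, hpG, hetaG, hεG]
    rw [Finset.sum_congr rfl (fun n _ => by rw [heta n])]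
    ring
  refine ⟨hstep, ?_⟩
  intro F hF1 hF2
  induction F, hF1 using Nat.le_induction with
  | base => rfl
  | succ F hF ih =>
    have := hstep (F + 1) (by omega) hF2
    simp only [Nat.add_sub_cancel] at this
    rw [this, ih (by omega)]
end

section
/- Let ν ≥ 1 be a real number, let m ≥ 1 be an integer, let a, b be real numbers with 0 < a ≤ b, and let e_1, …, e_m be nonnegative real numbers whose mean is a, i.e., Σ_{i=1}^{m} e_i = m·a. Then Σ_{i=1}^{m} [ (ν/2)·ln(b/a) + (e_i/2)·(1/b − 1/a) ] ≥ (m·(ν − 1)/2)·((b − a)/b) ≥ 0. -/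
open Finset

/-- Abstract nonnegativity of the noise-bin contribution: for `ν ≥ 1`, an integer `m ≥ 1`,
reals `0 < a ≤ b`, and nonnegative `e_1, …, e_m` with mean `a` (i.e. `Σ e_i = m·a`), one has
`Σ_i [(ν/2)·ln(b/a) + (e_i/2)·(1/b − 1/a)] ≥ (m(ν−1)/2)·((b−a)/b) ≥ 0`. -/
theorem noise_bin_lower_bound
    (ν : ℝ) (hν : 1 ≤ ν) (m : ℕ) (hm : 1 ≤ m)
    (a b : ℝ) (ha : 0 < a) (hab : a ≤ b)
    (e : ℕ → ℝ) (he : ∀ i ∈ Finset.range m, 0 ≤ e i)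
    (hsum : ∑ i ∈ Finset.range m, e i = (m : ℝ) * a) :
    ((m : ℝ) * (ν - 1) / 2) * ((b - a) / b) ≤
      ∑ i ∈ Finset.range m, ((ν / 2) * Real.log (b / a) + (e i / 2) * (1 / b - 1 / a)) ∧
    0 ≤ ((m : ℝ) * (ν - 1) / 2) * ((b - a) / b) := by
  have hb : 0 < b := lt_of_lt_of_le ha hab
  have hm1 : (1 : ℝ) ≤ (m : ℝ) := by exact_mod_cast hm
  have hlog : Real.log (b / a) ≥ 1 - a / b := by
    have h1 : Real.log (a / b) ≤ a / b - 1 :=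
      Real.log_le_sub_one_of_pos (div_pos ha hb)
    have h2 : Real.log (b / a) = - Real.log (a / b) := by
      rw [← Real.log_inv]
      congr 1
      field_simp
    linarith
  have hsum2 : ∑ i ∈ Finset.range m, ((ν / 2) * Real.log (b / a) + (e i / 2) * (1 / b - 1 / a))
      = (m : ℝ) * ((ν / 2) * Real.log (b / a)) + ((m : ℝ) * a / 2) * (1 / b - 1 / a) := by
    rw [Finset.sum_add_distrib, Finset.sum_const, Finset.card_range]
    have : ∑ i ∈ Finset.range m, (e i / 2) * (1 / b - 1 / a)
        = (∑ i ∈ Finset.range m, e i) / 2 * (1 / b - 1 / a) := by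
      rw [Finset.sum_div, ← Finset.sum_mul]
    rw [this, hsum]
    ring_nf
  have hkey : (1 / b - 1 / a) * a = a / b - 1 := by field_simp
  constructor
  · rw [hsum2]
    have h3 : ((m : ℝ) * a / 2) * (1 / b - 1 / a) = (m : ℝ) / 2 * (a / b - 1) := by
      field_simp
    rw [h3]
    have hν2 : 0 ≤ ν / 2 := by linarith
    have hm0 : (0 : ℝ) ≤ (m : ℝ) := by positivity
    have hab2 : a / b ≤ 1 := (div_le_one hb).mpr hab
    have : (ν / 2) * (1 - a / b) ≤ (ν / 2) * Real.log (b / a) :=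
      mul_le_mul_of_nonneg_left hlog hν2
    have heq : ((m : ℝ) * (ν - 1) / 2) * ((b - a) / b)
        = (m : ℝ) * ((ν / 2) * (1 - a / b)) + (m : ℝ) / 2 * (a / b - 1) := by
      field_simp; ring
    rw [heq]
    have := mul_le_mul_of_nonneg_left this hm0
    linarith
  · have h1 : 0 ≤ (b - a) / b := div_nonneg (by linarith) hb.le
    have h2 : 0 ≤ (m : ℝ) * (ν - 1) / 2 := by
      have : 0 ≤ (m : ℝ) := by positivity
      have : 0 ≤ ν - 1 := by linarith
      positivity
    exact mul_nonneg h2 h1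
end

section
/- Let N_b ≥ 2 be an integer, let ν ≥ 1 be a real number, let ε̄ = (ε̄_0, …, ε̄_{N_b−1}) be a nonincreasing vector of nonnegative real numbers, and let F be an integer with 1 ≤ F ≤ N_b − 1 such that ψ²_F > 0. Then the noise-bin contribution to the change in simplified log-likelihood is nonnegative: Σ_{n=F}^{N_b−1} [ (ν/2)·ln(ψ²_{F−1}/ψ²_F) + (ε̄_n/2)·(1/ψ²_{F−1} − 1/ψ²_F) ] ≥ 0. -/
open Finset

/-- For `ν ≥ 1`, a nonincreasing vector of nonnegative reals, and `1 ≤ F ≤ N_b − 1` with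
`ψ²_F > 0`, the noise-bin contribution to the change in simplified log-likelihood is
nonnegative: `Σ_{n=F}^{N_b−1} [(ν/2)·ln(ψ²_{F−1}/ψ²_F) + (ε̄_n/2)·(1/ψ²_{F−1} − 1/ψ²_F)] ≥ 0`. -/
theorem noise_bin_contribution_nonneg
    (Nb : ℕ) (hNb : 2 ≤ Nb) (ν : ℝ) (hν : 1 ≤ ν)
    (ε : ℕ → ℝ) (hεnonneg : ∀ n : ℕ, 0 ≤ ε n)
    (hmono : ∀ i j : ℕ, i ≤ j → j ≤ Nb - 1 → ε j ≤ ε i)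
    (F : ℕ) (hF1 : 1 ≤ F) (hF2 : F ≤ Nb - 1)
    (hψF : 0 < psiSq Nb ε F) :
    0 ≤ ∑ n ∈ Finset.Ico F Nb,
        ((ν / 2) * Real.log (psiSq Nb ε (F - 1) / psiSq Nb ε F)
          + (ε n / 2) * (1 / psiSq Nb ε (F - 1) - 1 / psiSq Nb ε F)) := by
  have hFNb : F < Nb := by omega
  set B := psiSq Nb ε F with hBdef
  set A := psiSq Nb ε (F - 1) with hAdef
  set S := ∑ n ∈ Finset.Ico F Nb, ε n with hSdef
  have hM : (0:ℝ) < (Nb:ℝ) - (F:ℝ) := by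
    rw [sub_pos]; exact_mod_cast hFNb
  have hSB : S = ((Nb:ℝ) - (F:ℝ)) * B := by
    rw [hBdef, psiSq]; field_simp
    exact hSdef
  -- sum over Ico (F-1) Nb
  have hcast : ((F - 1 : ℕ) : ℝ) = (F:ℝ) - 1 := by
    have := Nat.cast_sub hF1 (R := ℝ); simpa using this
  have hsucc : F - 1 + 1 = F := by omega
  have hsplit : ∑ n ∈ Finset.Ico (F-1) Nb, ε n = ε (F-1) + S := by
    rw [Finset.sum_eq_sum_Ico_succ_bot (by omega : F - 1 < Nb), hsucc]
  have hA_eq : A * (((Nb:ℝ) - (F:ℝ)) + 1) = ε (F-1) + S := by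
    rw [hAdef, psiSq, hsplit, hcast]
    have hc : ((F:ℝ)) + 1 ≤ (Nb:ℝ) := by exact_mod_cast hFNb
    have h1 : (Nb:ℝ) - ((F:ℝ) - 1) ≠ 0 := by intro h; linarith
    field_simp
    ring_nf
  -- each ε n ≤ ε (F-1) on Ico F Nb
  have hεB : B ≤ ε (F-1) := by
    have hle : S ≤ ((Nb:ℝ) - (F:ℝ)) * ε (F-1) := by
      have := Finset.sum_le_sum (f := ε) (g := fun _ => ε (F-1))
        (s := Finset.Ico F Nb) (by
          intro n hn
          simp only [Finset.mem_Ico] at hn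
          exact hmono (F-1) n (by omega) (by omega))
      rwa [Finset.sum_const, Nat.card_Ico, nsmul_eq_mul,
        Nat.cast_sub hFNb.le] at this
    rw [hSB] at hle
    nlinarith
  have hBA : B ≤ A := by nlinarith
  have hA : 0 < A := lt_of_lt_of_le hψF hBA
  have hLnn : 0 ≤ Real.log (A / B) :=
    Real.log_nonneg ((one_le_div hψF).mpr hBA)
  have hlog : 1 - B / A ≤ Real.log (A / B) := by
    have h1 : Real.log (B / A) ≤ B / A - 1 :=
      Real.log_le_sub_one_of_pos (div_pos hψF hA)
    have h2 : Real.log (B / A) = -Real.log (A / B) := by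
      rw [Real.log_div hψF.ne' hA.ne', Real.log_div hA.ne' hψF.ne']; ring
    linarith [h1, h2 ▸ h1]
  have hνL : Real.log (A / B) ≤ ν * Real.log (A / B) :=
    le_mul_of_one_le_left hLnn hν
  have hsum : (∑ n ∈ Finset.Ico F Nb,
        ((ν / 2) * Real.log (A / B) + (ε n / 2) * (1 / A - 1 / B)))
      = ((Nb:ℝ) - (F:ℝ)) * ((ν / 2) * Real.log (A / B))
        + S * ((1 / A - 1 / B) / 2) := by
    rw [Finset.sum_add_distrib, Finset.sum_const, Nat.card_Ico, nsmul_eq_mul,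
      Nat.cast_sub hFNb.le]
    congr 1
    rw [hSdef, Finset.sum_mul]
    apply Finset.sum_congr rfl
    intro n _; ring
  rw [hsum, hSB]
  have hfrac : B * (1 / A - 1 / B) = B / A - 1 := by
    field_simp
  have hkey : 0 ≤ ν * Real.log (A / B) + (B / A - 1) := by nlinarith
  have : ((Nb:ℝ) - (F:ℝ)) * ((ν / 2) * Real.log (A / B))
        + ((Nb:ℝ) - (F:ℝ)) * B * ((1 / A - 1 / B) / 2)
      = (((Nb:ℝ) - (F:ℝ)) / 2) * (ν * Real.log (A / B) + (B / A - 1)) := by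
    rw [← hfrac]; ring
  rw [this]
  positivity
end
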